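/- Let n ≥ 1 and let S_n be the star graph on vertices {0,1,...,n-1}. Let M be any of the monoids PsEnd(S_n), PswEnd(S_n), IEnd(S_n), PEnd(S_n), PwEnd(S_n) (under composition of partial transformations), and let α ∈ M. Then α is a regular element of M if and only if 0 ∈ dom(α) or im(α) = {0} or 0 ∉ im(α). -/

import Mathlib

def pmul {V : Type*} (f g : V → Option V) : V → Option V := fun x => (f x).bind g

def pdom {V : Type*} (f : V → Option V) : Set V := {x | f x ≠ none}

def pim {V : Type*} (f : V → Option V) : Set V := {y | ∃ x, f x = some y}

def pker {V : Type*} (f : V → Option V) : V → V → Prop := fun x y => f x ≠ none ∧ f x = f y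

def PInj {V : Type*} (f : V → Option V) : Prop := ∀ u v a, f u = some a → f v = some a → u = v

def edge {n : ℕ} (u v : Fin n) : Prop := (u.val = 0 ∧ v.val ≠ 0) ∨ (v.val = 0 ∧ u.val ≠ 0)

def IsPEnd {n : ℕ} (α : Fin n → Option (Fin n)) : Prop :=
  ∀ u v a b, α u = some a → α v = some b → edge u v → edge a b

def IsPwEnd {n : ℕ} (α : Fin n → Option (Fin n)) : Prop :=
  ∀ u v a b, α u = some a → α v = some b → edge u v → a ≠ b → edge a b

def IsPsEnd {n : ℕ} (α : Fin n → Option (Fin n)) : Prop :=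
  ∀ u v a b, α u = some a → α v = some b → (edge u v ↔ edge a b)

def IsPswEnd {n : ℕ} (α : Fin n → Option (Fin n)) : Prop :=
  ∀ u v a b, α u = some a → α v = some b → ((edge u v ∧ a ≠ b) ↔ edge a b)

def PEndS (n : ℕ) : Set (Fin n → Option (Fin n)) := {α | IsPEnd α}
def PwEndS (n : ℕ) : Set (Fin n → Option (Fin n)) := {α | IsPwEnd α}
def PsEndS (n : ℕ) : Set (Fin n → Option (Fin n)) := {α | IsPsEnd α}
def PswEndS (n : ℕ) : Set (Fin n → Option (Fin n)) := {α | IsPswEnd α}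
def IEndS (n : ℕ) : Set (Fin n → Option (Fin n)) := {α | PInj α ∧ IsPEnd α}
def PAutS (n : ℕ) : Set (Fin n → Option (Fin n)) := {α | PInj α ∧ IsPsEnd α}

def RegularIn {V : Type*} (M : Set (V → Option V)) (a : V → Option V) : Prop :=
  ∃ b ∈ M, pmul (pmul a b) a = a

def GreenL {V : Type*} (M : Set (V → Option V)) (a b : V → Option V) : Prop :=
  (∃ g ∈ M, a = pmul g b) ∧ (∃ g ∈ M, b = pmul g a)

def GreenR {V : Type*} (M : Set (V → Option V)) (a b : V → Option V) : Prop :=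
  (∃ g ∈ M, a = pmul b g) ∧ (∃ g ∈ M, b = pmul a g)

def GreenH {V : Type*} (M : Set (V → Option V)) (a b : V → Option V) : Prop :=
  GreenL M a b ∧ GreenR M a b

def GreenJ {V : Type*} (M : Set (V → Option V)) (a b : V → Option V) : Prop :=
  (∃ g ∈ M, ∃ h ∈ M, a = pmul (pmul g b) h) ∧ (∃ g ∈ M, ∃ h ∈ M, b = pmul (pmul g a) h)


section Aux

variable {n : ℕ}

lemma edge_iff (hn : 1 ≤ n) (u v : Fin n) :
    edge u v ↔ ((u = ⟨0, hn⟩ ∧ v ≠ ⟨0, hn⟩) ∨ (v = ⟨0, hn⟩ ∧ u ≠ ⟨0, hn⟩)) := by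
  simp [edge, Fin.ext_iff]

lemma edge_irrefl' (u : Fin n) : ¬ edge u u := by
  simp [edge]

lemma not_edge_of_ne (hn : 1 ≤ n) {u v : Fin n} (hu : u ≠ ⟨0, hn⟩) (hv : v ≠ ⟨0, hn⟩) :
    ¬ edge u v := by
  rw [edge_iff hn]; tauto

lemma psEnd_toPEnd {α : Fin n → Option (Fin n)} (h : IsPsEnd α) : IsPEnd α :=
  fun u v a b hu hv he => (h u v a b hu hv).mp he

lemma pEnd_toPwEnd {α : Fin n → Option (Fin n)} (h : IsPEnd α) : IsPwEnd α :=
  fun u v a b hu hv he _ => h u v a b hu hv he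

lemma psEnd_toPswEnd {α : Fin n → Option (Fin n)} (h : IsPsEnd α) : IsPswEnd α := by
  intro u v a b hu hv
  constructor
  · rintro ⟨he, _⟩; exact (h u v a b hu hv).mp he
  · intro hab
    refine ⟨(h u v a b hu hv).mpr hab, ?_⟩
    rintro rfl
    exact edge_irrefl' a hab

lemma mem_of_psEnd {M : Set (Fin n → Option (Fin n))}
    (hM : M = PsEndS n ∨ M = PswEndS n ∨ M = IEndS n ∨ M = PEndS n ∨ M = PwEndS n)
    {s : Fin n → Option (Fin n)} (hinj : PInj s) (hps : IsPsEnd s) : s ∈ M := by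
  rcases hM with rfl | rfl | rfl | rfl | rfl
  · exact hps
  · exact psEnd_toPswEnd hps
  · exact ⟨hinj, psEnd_toPEnd hps⟩
  · exact psEnd_toPEnd hps
  · exact pEnd_toPwEnd (psEnd_toPEnd hps)

lemma regular_of_section {M : Set (Fin n → Option (Fin n))}
    (hM : M = PsEndS n ∨ M = PswEndS n ∨ M = IEndS n ∨ M = PEndS n ∨ M = PwEndS n)
    {α s : Fin n → Option (Fin n)}
    (hsec : ∀ y w, s y = some w → α w = some y)
    (htot : ∀ x y, α x = some y → s y ≠ none)
    (hps : IsPsEnd s) : RegularIn M α := by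
  have hinj : PInj s := by
    intro u v a hu hv
    have h1 := hsec u a hu
    have h2 := hsec v a hv
    rw [h1] at h2
    exact Option.some.inj h2
  refine ⟨s, mem_of_psEnd hM hinj hps, ?_⟩
  funext x
  cases hx : α x with
  | none => simp [pmul, hx]
  | some y =>
    cases hy : s y with
    | none => exact absurd hy (htot x y hx)
    | some w => simp [pmul, hx, hy, hsec y w hy]

lemma psEnd_of_key (hn : 1 ≤ n) {s : Fin n → Option (Fin n)}
    (key : ∀ u a, s u = some a → (u = (⟨0, hn⟩ : Fin n) ↔ a = (⟨0, hn⟩ : Fin n))) :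
    IsPsEnd s := by
  intro u v a b hu hv
  have k1 := key u a hu
  have k2 := key v b hv
  rw [edge_iff hn, edge_iff hn]
  tauto

lemma psEnd_of_antikey (hn : 1 ≤ n) {s : Fin n → Option (Fin n)}
    (key : ∀ u a, s u = some a → (u = (⟨0, hn⟩ : Fin n) ↔ a ≠ (⟨0, hn⟩ : Fin n))) :
    IsPsEnd s := by
  intro u v a b hu hv
  have k1 := key u a hu
  have k2 := key v b hv
  rw [edge_iff hn, edge_iff hn]
  tauto

lemma no_edge_pre {α : Fin n → Option (Fin n)}
    (hA : IsPEnd α ∨ IsPwEnd α ∨ IsPsEnd α ∨ IsPswEnd α)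
    {u v a b : Fin n} (ha : α a = some u) (hb : α b = some v)
    (huv : ¬ edge u v) (heq : u = v → a = b) : ¬ edge a b := by
  intro hab
  by_cases h : u = v
  · exact edge_irrefl' a ((heq h) ▸ hab)
  · rcases hA with hE | hE | hE | hE
    · exact huv (hE a b u v ha hb hab)
    · exact huv (hE a b u v ha hb hab h)
    · exact huv ((hE a b u v ha hb).mp hab)
    · exact huv ((hE a b u v ha hb).mp ⟨hab, h⟩)

lemma im_sub (hn : 1 ≤ n) {α : Fin n → Option (Fin n)}
    (hA : IsPEnd α ∨ IsPwEnd α ∨ IsPsEnd α ∨ IsPswEnd α)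
    {c : Fin n} (hc : α ⟨0, hn⟩ = some c) (hcz : c ≠ (⟨0, hn⟩ : Fin n))
    {v : Fin n} (hv : v ∈ pim α) : v = (⟨0, hn⟩ : Fin n) ∨ v = c := by
  by_contra hcon
  push_neg at hcon
  obtain ⟨hvz, hvc⟩ := hcon
  obtain ⟨x, hx⟩ := hv
  have hxz : x ≠ (⟨0, hn⟩ : Fin n) := by
    intro h; rw [h, hc] at hx; exact hvc (Option.some.inj hx).symm
  have hexz : edge x (⟨0, hn⟩ : Fin n) := by
    rw [edge_iff hn]; exact Or.inr ⟨rfl, hxz⟩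
  have hvc' : edge v c := by
    rcases hA with hE | hE | hE | hE
    · exact hE x ⟨0, hn⟩ v c hx hc hexz
    · exact hE x ⟨0, hn⟩ v c hx hc hexz hvc
    · exact (hE x ⟨0, hn⟩ v c hx hc).mp hexz
    · exact (hE x ⟨0, hn⟩ v c hx hc).mp ⟨hexz, hvc⟩
  exact not_edge_of_ne hn hvz hcz hvc'

end Aux

theorem stmt12 (n : ℕ) (hn : 1 ≤ n) (M : Set (Fin n → Option (Fin n)))
    (hM : M = PsEndS n ∨ M = PswEndS n ∨ M = IEndS n ∨ M = PEndS n ∨ M = PwEndS n)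
    (α : Fin n → Option (Fin n)) (hα : α ∈ M) :
    RegularIn M α ↔
      ((⟨0, hn⟩ : Fin n) ∈ pdom α ∨ pim α = {(⟨0, hn⟩ : Fin n)} ∨ (⟨0, hn⟩ : Fin n) ∉ pim α) := by
  classical
  have hA : IsPEnd α ∨ IsPwEnd α ∨ IsPsEnd α ∨ IsPswEnd α := by
    rcases hM with rfl | rfl | rfl | rfl | rfl
    · exact Or.inr (Or.inr (Or.inl hα))
    · exact Or.inr (Or.inr (Or.inr hα))
    · exact Or.inl hα.2
    · exact Or.inl hα
    · exact Or.inr (Or.inl hα)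
  constructor
  · -- forward: regular → condition
    rintro ⟨β, hβM, hβ⟩
    by_contra hc
    push_neg at hc
    obtain ⟨hdom, him, him0⟩ := hc
    have hαz : α ⟨0, hn⟩ = none := by
      by_contra h; exact hdom h
    have hsub : ¬ pim α ⊆ {(⟨0, hn⟩ : Fin n)} := by
      intro h
      exact him (Set.Subset.antisymm h (by simpa using him0))
    obtain ⟨x, hx⟩ := him0
    obtain ⟨b, hbim, hbz⟩ := Set.not_subset.mp hsub
    rw [Set.mem_singleton_iff] at hbz
    obtain ⟨y, hy⟩ := hbim
    have h1 := congrFun hβ x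
    simp only [pmul, hx, Option.bind_some] at h1
    obtain ⟨w, hw1, hw2⟩ := Option.bind_eq_some_iff.mp h1
    have h2 := congrFun hβ y
    simp only [pmul, hy, Option.bind_some] at h2
    obtain ⟨w', hw1', hw2'⟩ := Option.bind_eq_some_iff.mp h2
    have hwz : w ≠ (⟨0, hn⟩ : Fin n) := by
      intro h; rw [h, hαz] at hw2; cases hw2
    have hwz' : w' ≠ (⟨0, hn⟩ : Fin n) := by
      intro h; rw [h, hαz] at hw2'; cases hw2'
    have hezb : edge (⟨0, hn⟩ : Fin n) b := by
      rw [edge_iff hn]; exact Or.inl ⟨rfl, hbz⟩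
    have hww' : w ≠ w' := by
      intro h; rw [h, hw2'] at hw2; exact hbz (Option.some.inj hw2)
    have heww : edge w w' := by
      rcases hM with rfl | rfl | rfl | rfl | rfl
      · exact (hβM ⟨0, hn⟩ b w w' hw1 hw1').mp hezb
      · exact (hβM ⟨0, hn⟩ b w w' hw1 hw1').mp ⟨hezb, hww'⟩
      · exact hβM.2 ⟨0, hn⟩ b w w' hw1 hw1' hezb
      · exact hβM ⟨0, hn⟩ b w w' hw1 hw1' hezb
      · exact hβM ⟨0, hn⟩ b w w' hw1 hw1' hezb hww'
    exact not_edge_of_ne hn hwz hwz' heww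
  · -- backward: condition → regular
    intro h
    rcases h with hdom | him | him0
    · -- 0 ∈ dom α
      obtain ⟨c, hc⟩ : ∃ c, α ⟨0, hn⟩ = some c := by
        cases hαz : α ⟨0, hn⟩ with
        | none => exact absurd hαz hdom
        | some c => exact ⟨c, rfl⟩
      by_cases hcz : c = (⟨0, hn⟩ : Fin n)
      · -- α 0 = 0
        subst hcz
        set s : Fin n → Option (Fin n) := fun y =>
          if y = (⟨0, hn⟩ : Fin n) then some (⟨0, hn⟩ : Fin n)
          else if h : ∃ x, α x = some y then some h.choose else none with hs
        have hsec : ∀ y w, s y = some w → α w = some y := by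
          intro y w hw
          by_cases hy : y = (⟨0, hn⟩ : Fin n)
          · simp only [hs, if_pos hy] at hw
            rw [← Option.some.inj hw, hc, hy]
          · simp only [hs, if_neg hy] at hw
            by_cases he : ∃ x, α x = some y
            · rw [dif_pos he] at hw
              rw [← Option.some.inj hw]; exact he.choose_spec
            · rw [dif_neg he] at hw; cases hw
        have htot : ∀ x y, α x = some y → s y ≠ none := by
          intro x y hxy
          have he : ∃ x, α x = some y := ⟨x, hxy⟩
          by_cases hy : y = (⟨0, hn⟩ : Fin n)
          · simp [hs, if_pos hy]
          · simp only [hs, if_neg hy, dif_pos he]; simp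
        refine regular_of_section hM hsec htot (psEnd_of_key hn ?_)
        intro u a hu
        constructor
        · intro huz
          rw [hs] at hu; simp only [if_pos huz] at hu
          exact (Option.some.inj hu).symm
        · intro haz
          have := hsec u a hu
          rw [haz, hc] at this
          exact (Option.some.inj this).symm
      · -- α 0 = c ≠ 0
        set s : Fin n → Option (Fin n) := fun y =>
          if y = c then some (⟨0, hn⟩ : Fin n)
          else if h : ∃ x, α x = some y then some h.choose else none with hs
        have hsec : ∀ y w, s y = some w → α w = some y := by
          intro y w hw
          by_cases hy : y = c
          · simp only [hs, if_pos hy] at hw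
            rw [← Option.some.inj hw, hc, hy]
          · simp only [hs, if_neg hy] at hw
            by_cases he : ∃ x, α x = some y
            · rw [dif_pos he] at hw
              rw [← Option.some.inj hw]; exact he.choose_spec
            · rw [dif_neg he] at hw; cases hw
        have htot : ∀ x y, α x = some y → s y ≠ none := by
          intro x y hxy
          have he : ∃ x, α x = some y := ⟨x, hxy⟩
          by_cases hy : y = c
          · simp [hs, if_pos hy]
          · simp only [hs, if_neg hy, dif_pos he]; simp
        refine regular_of_section hM hsec htot (psEnd_of_antikey hn ?_)
        intro u a hu
        by_cases huc : u = c
        · have haz : a = (⟨0, hn⟩ : Fin n) := by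
            rw [hs] at hu; simp only [if_pos huc] at hu
            exact (Option.some.inj hu).symm
          constructor
          · intro huz; exact absurd (huz ▸ huc).symm hcz
          · intro hane; exact absurd haz hane
        · have hau : α a = some u := hsec u a hu
          have huim : u ∈ pim α := ⟨a, hau⟩
          have huz : u = (⟨0, hn⟩ : Fin n) := by
            rcases im_sub hn hA hc hcz huim with h | h
            · exact h
            · exact absurd h huc
          have hane : a ≠ (⟨0, hn⟩ : Fin n) := by
            intro h
            rw [h, hc] at hau
            exact huc (Option.some.inj hau).symm
          exact ⟨fun _ => hane, fun _ => huz⟩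
    · -- im α = {0}
      have hno : ∀ u v : Fin n, u ∈ pim α → v ∈ pim α → ¬ edge u v := by
        intro u v hu hv
        rw [him, Set.mem_singleton_iff] at hu hv
        rw [hu, hv]
        exact edge_irrefl' _
      set s : Fin n → Option (Fin n) := fun y =>
        if h : ∃ x, α x = some y then some h.choose else none with hs
      have hsec : ∀ y w, s y = some w → α w = some y := by
        intro y w hw
        by_cases he : ∃ x, α x = some y
        · simp only [hs, dif_pos he] at hw
          rw [← Option.some.inj hw]; exact he.choose_spec
        · simp only [hs, dif_neg he] at hw; cases hw
      have htot : ∀ x y, α x = some y → s y ≠ none := by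
        intro x y hxy
        have he : ∃ x, α x = some y := ⟨x, hxy⟩
        simp only [hs, dif_pos he]; simp
      refine regular_of_section hM hsec htot ?_
      intro u v a b hu hv
      have hau := hsec u a hu
      have hbv := hsec v b hv
      have heq : u = v → a = b := by
        intro h; rw [h] at hu; rw [hu] at hv; exact Option.some.inj hv
      exact iff_of_false (hno u v ⟨a, hau⟩ ⟨b, hbv⟩)
        (no_edge_pre hA hau hbv (hno u v ⟨a, hau⟩ ⟨b, hbv⟩) heq)
    · -- 0 ∉ im α
      have hno : ∀ u v : Fin n, u ∈ pim α → v ∈ pim α → ¬ edge u v := by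
        intro u v hu hv
        refine not_edge_of_ne hn ?_ ?_
        · intro h; exact him0 (h ▸ hu)
        · intro h; exact him0 (h ▸ hv)
      set s : Fin n → Option (Fin n) := fun y =>
        if h : ∃ x, α x = some y then some h.choose else none with hs
      have hsec : ∀ y w, s y = some w → α w = some y := by
        intro y w hw
        by_cases he : ∃ x, α x = some y
        · simp only [hs, dif_pos he] at hw
          rw [← Option.some.inj hw]; exact he.choose_spec
        · simp only [hs, dif_neg he] at hw; cases hw
      have htot : ∀ x y, α x = some y → s y ≠ none := by
        intro x y hxy
        have he : ∃ x, α x = some y := ⟨x, hxy⟩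
        simp only [hs, dif_pos he]; simp
      refine regular_of_section hM hsec htot ?_
      intro u v a b hu hv
      have hau := hsec u a hu
      have hbv := hsec v b hv
      have heq : u = v → a = b := by
        intro h; rw [h] at hu; rw [hu] at hv; exact Option.some.inj hv
      exact iff_of_false (hno u v ⟨a, hau⟩ ⟨b, hbv⟩)
        (no_edge_pre hA hau hbv (hno u v ⟨a, hau⟩ ⟨b, hbv⟩) heq)
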